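/- Let H be a model graph in which the neighborhoods of labels A and C coincide (both the full and dotted neighborhoods: N_full({A}) = N_full({C}) and N_dotted({A}) = N_dotted({C})) and similarly for B and D. Then a simple graph G admits an H-partition if and only if G admits a partition of V(G) into four nonempty classes V_A, V_B, V_C, V_D such that the combined classes V_A ∪ V_C and V_B ∪ V_D satisfy all full/dotted constraints of H restricted to the two 'super-labels' {A,C} and {B,D}: i.e., if (A,B) is a full edge of H then every vertex of V_A ∪ V_C is adjacent to every vertex of V_B ∪ V_D, and if (A,B) is dotted then every vertex of V_A ∪ V_C is nonadjacent to every vertex of V_B ∪ V_D. -/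

import Mathlib

inductive Label : Type
  | A | B | C | D
deriving DecidableEq

instance : Fintype Label :=
  ⟨{Label.A, Label.B, Label.C, Label.D}, fun x => by cases x <;> simp⟩

/-- A model graph: an undirected graph on the four labels A,B,C,D, each edge
marked full or dotted (never both), symmetric and irreflexive. -/
structure ModelGraph : Type where
  full : Label → Label → Bool
  dotted : Label → Label → Bool
  full_symm : ∀ p q, full p q = full q p
  dotted_symm : ∀ p q, dotted p q = dotted q p
  full_irrefl : ∀ p, full p p = false
  dotted_irrefl : ∀ p, dotted p p = false
  not_both : ∀ p q, ¬ (full p q = true ∧ dotted p q = true)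

/-- `ℓ` is an `H`-partition of `G`: all four classes nonempty, full edges of `H`
force complete adjacency, dotted edges force complete nonadjacency. -/
def IsHPartition {V : Type} (G : SimpleGraph V) (H : ModelGraph) (ℓ : V → Label) : Prop :=
  (∀ p : Label, ∃ v, ℓ v = p) ∧
  (∀ u v, H.full (ℓ u) (ℓ v) = true → G.Adj u v) ∧
  (∀ u v, H.dotted (ℓ u) (ℓ v) = true → ¬ G.Adj u v)

/-- Label `p` is possible for vertex `v` relative to the partial labeling `pl`. -/
def Possible {V : Type} (G : SimpleGraph V) (H : ModelGraph)
    (pl : V → Option Label) (v : V) (p : Label) : Prop :=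
  (∀ q y, H.full p q = true → pl y = some q → G.Adj v y) ∧
  (∀ q y, H.dotted p q = true → pl y = some q → ¬ G.Adj v y)

/-- Full-edge neighborhood of a set of labels. -/
def NFull (H : ModelGraph) (L : Finset Label) : Finset Label :=
  Finset.univ.filter (fun q => ∃ p ∈ L, H.full p q = true)

/-- Dotted-edge neighborhood of a set of labels. -/
def NDotted (H : ModelGraph) (L : Finset Label) : Finset Label :=
  Finset.univ.filter (fun q => ∃ p ∈ L, H.dotted p q = true)

/-- Class sizes `a,b,c,d` as a function of the label. -/
def cnt (a b c d : ℕ) : Label → ℕ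
  | .A => a | .B => b | .C => c | .D => d

/-- if labels A and C impose identical constraints, as do B and D,
then G admits an H-partition iff it admits a partition into four nonempty
classes satisfying the constraints of the two super-labels {A,C} and {B,D}. -/
theorem stmt_13 (H : ModelGraph)
    (hAC_full : NFull H {Label.A} = NFull H {Label.C})
    (hAC_dot : NDotted H {Label.A} = NDotted H {Label.C})
    (hBD_full : NFull H {Label.B} = NFull H {Label.D})
    (hBD_dot : NDotted H {Label.B} = NDotted H {Label.D})
    {V : Type} (G : SimpleGraph V) :
    (∃ ℓ : V → Label, IsHPartition G H ℓ) ↔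
      ∃ ℓ : V → Label, (∀ p : Label, ∃ v, ℓ v = p) ∧
        (H.full Label.A Label.B = true →
          ∀ u v, (ℓ u = Label.A ∨ ℓ u = Label.C) → (ℓ v = Label.B ∨ ℓ v = Label.D) →
            G.Adj u v) ∧
        (H.dotted Label.A Label.B = true →
          ∀ u v, (ℓ u = Label.A ∨ ℓ u = Label.C) → (ℓ v = Label.B ∨ ℓ v = Label.D) →
            ¬ G.Adj u v) := by

  -- Pointwise consequences of the neighborhood equalities
  have hF : ∀ q, H.full Label.A q = H.full Label.C q := by
    intro q
    have := Finset.ext_iff.mp hAC_full q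
    simp [NFull] at this
    cases hA : H.full Label.A q <;> cases hC : H.full Label.C q <;> simp_all
  have hD : ∀ q, H.dotted Label.A q = H.dotted Label.C q := by
    intro q
    have := Finset.ext_iff.mp hAC_dot q
    simp [NDotted] at this
    cases hA : H.dotted Label.A q <;> cases hC : H.dotted Label.C q <;> simp_all
  have hF2 : ∀ q, H.full Label.B q = H.full Label.D q := by
    intro q
    have := Finset.ext_iff.mp hBD_full q
    simp [NFull] at this
    cases hA : H.full Label.B q <;> cases hC : H.full Label.D q <;> simp_all
  have hD2 : ∀ q, H.dotted Label.B q = H.dotted Label.D q := by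
    intro q
    have := Finset.ext_iff.mp hBD_dot q
    simp [NDotted] at this
    cases hA : H.dotted Label.B q <;> cases hC : H.dotted Label.D q <;> simp_all
  -- full edge facts
  have fAC : H.full Label.A Label.C = false := (hF Label.C).trans (H.full_irrefl _)
  have fCA : H.full Label.C Label.A = false := (H.full_symm _ _).trans fAC
  have fBD : H.full Label.B Label.D = false := (hF2 Label.D).trans (H.full_irrefl _)
  have fDB : H.full Label.D Label.B = false := (H.full_symm _ _).trans fBD
  have fCB : H.full Label.C Label.B = H.full Label.A Label.B := (hF Label.B).symm
  have fAD : H.full Label.A Label.D = H.full Label.A Label.B := by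
    rw [H.full_symm, ← hF2, H.full_symm]
  have fCD : H.full Label.C Label.D = H.full Label.A Label.B := by
    rw [← hF, fAD]
  have fBA : H.full Label.B Label.A = H.full Label.A Label.B := H.full_symm _ _
  have fBC : H.full Label.B Label.C = H.full Label.A Label.B := by
    rw [H.full_symm, fCB]
  have fDA : H.full Label.D Label.A = H.full Label.A Label.B := by
    rw [H.full_symm, fAD]
  have fDC : H.full Label.D Label.C = H.full Label.A Label.B := by
    rw [H.full_symm, fCD]
  -- dotted edge facts
  have dAC : H.dotted Label.A Label.C = false := (hD Label.C).trans (H.dotted_irrefl _)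
  have dCA : H.dotted Label.C Label.A = false := (H.dotted_symm _ _).trans dAC
  have dBD : H.dotted Label.B Label.D = false := (hD2 Label.D).trans (H.dotted_irrefl _)
  have dDB : H.dotted Label.D Label.B = false := (H.dotted_symm _ _).trans dBD
  have dCB : H.dotted Label.C Label.B = H.dotted Label.A Label.B := (hD Label.B).symm
  have dAD : H.dotted Label.A Label.D = H.dotted Label.A Label.B := by
    rw [H.dotted_symm, ← hD2, H.dotted_symm]
  have dCD : H.dotted Label.C Label.D = H.dotted Label.A Label.B := by
    rw [← hD, dAD]
  have dBA : H.dotted Label.B Label.A = H.dotted Label.A Label.B := H.dotted_symm _ _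
  have dBC : H.dotted Label.B Label.C = H.dotted Label.A Label.B := by
    rw [H.dotted_symm, dCB]
  have dDA : H.dotted Label.D Label.A = H.dotted Label.A Label.B := by
    rw [H.dotted_symm, dAD]
  have dDC : H.dotted Label.D Label.C = H.dotted Label.A Label.B := by
    rw [H.dotted_symm, dCD]
  constructor
  · rintro ⟨ℓ, hne, hfull, hdot⟩
    refine ⟨ℓ, hne, ?_, ?_⟩
    · intro hAB u v hu hv
      apply hfull
      rcases hu with h1 | h1 <;> rcases hv with h2 | h2 <;>
        rw [h1, h2] <;> simp_all
    · intro hAB u v hu hv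
      apply hdot
      rcases hu with h1 | h1 <;> rcases hv with h2 | h2 <;>
        rw [h1, h2] <;> simp_all
  · rintro ⟨ℓ, hne, hfull, hdot⟩
    refine ⟨ℓ, hne, ?_, ?_⟩
    · intro u v h
      cases hu : ℓ u <;> cases hv : ℓ v <;> rw [hu, hv] at h
      case A.A => rw [H.full_irrefl] at h; exact absurd h (by simp)
      case A.B => exact hfull h u v (Or.inl hu) (Or.inl hv)
      case A.C => rw [fAC] at h; exact absurd h (by simp)
      case A.D => exact hfull (fAD ▸ h) u v (Or.inl hu) (Or.inr hv)
      case B.A => exact (hfull (fBA ▸ h) v u (Or.inl hv) (Or.inl hu)).symm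
      case B.B => rw [H.full_irrefl] at h; exact absurd h (by simp)
      case B.C => exact (hfull (fBC ▸ h) v u (Or.inr hv) (Or.inl hu)).symm
      case B.D => rw [fBD] at h; exact absurd h (by simp)
      case C.A => rw [fCA] at h; exact absurd h (by simp)
      case C.B => exact hfull (fCB ▸ h) u v (Or.inr hu) (Or.inl hv)
      case C.C => rw [H.full_irrefl] at h; exact absurd h (by simp)
      case C.D => exact hfull (fCD ▸ h) u v (Or.inr hu) (Or.inr hv)
      case D.A => exact (hfull (fDA ▸ h) v u (Or.inl hv) (Or.inr hu)).symm
      case D.B => rw [fDB] at h; exact absurd h (by simp)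
      case D.C => exact (hfull (fDC ▸ h) v u (Or.inr hv) (Or.inr hu)).symm
      case D.D => rw [H.full_irrefl] at h; exact absurd h (by simp)
    · intro u v h
      cases hu : ℓ u <;> cases hv : ℓ v <;> rw [hu, hv] at h
      case A.A => rw [H.dotted_irrefl] at h; exact absurd h (by simp)
      case A.B => exact hdot h u v (Or.inl hu) (Or.inl hv)
      case A.C => rw [dAC] at h; exact absurd h (by simp)
      case A.D => exact hdot (dAD ▸ h) u v (Or.inl hu) (Or.inr hv)
      case B.A => exact fun ha => hdot (dBA ▸ h) v u (Or.inl hv) (Or.inl hu) ha.symm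
      case B.B => rw [H.dotted_irrefl] at h; exact absurd h (by simp)
      case B.C => exact fun ha => hdot (dBC ▸ h) v u (Or.inr hv) (Or.inl hu) ha.symm
      case B.D => rw [dBD] at h; exact absurd h (by simp)
      case C.A => rw [dCA] at h; exact absurd h (by simp)
      case C.B => exact hdot (dCB ▸ h) u v (Or.inr hu) (Or.inl hv)
      case C.C => rw [H.dotted_irrefl] at h; exact absurd h (by simp)
      case C.D => exact hdot (dCD ▸ h) u v (Or.inr hu) (Or.inr hv)
      case D.A => exact fun ha => hdot (dDA ▸ h) v u (Or.inl hv) (Or.inr hu) ha.symm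
      case D.B => rw [dDB] at h; exact absurd h (by simp)
      case D.C => exact fun ha => hdot (dDC ▸ h) v u (Or.inr hv) (Or.inr hu) ha.symm
      case D.D => rw [H.dotted_irrefl] at h; exact absurd h (by simp)
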